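/- Let q = 2^m with m a positive integer and let K be a finite field with q^3 elements. Let A, B ∈ K be nonzero with A^q·B ≠ 1 and E(A,B) = 0. Then f_{A,B}(x) = x^(q^2−q+1) + A·x^(q^2) + B·x is not a bijection of K. -/

import Mathlib

theorem stmt_6 (m : ℕ) (hm : 1 ≤ m) (q : ℕ) (hq : q = 2 ^ m)
    (K : Type*) [Field K] [Fintype K] (hK : Fintype.card K = q ^ 3)
    (A B : K) (hA : A ≠ 0) (hB : B ≠ 0)
    (h1 : A ^ q * B ≠ 1)
    (hE : A ^ (1 + q + q ^ 2) + A * B ^ (q ^ 2) + A ^ q * B + A ^ (q ^ 2) * B ^ q +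
        B ^ (1 + q + q ^ 2) + 1 = 0) :
    ¬ Function.Bijective (fun x : K => x ^ (q ^ 2 - q + 1) + A * x ^ (q ^ 2) + B * x) := by
  intro hbij
  have hq2 : 2 ≤ q := by
    subst hq
    calc 2 = 2 ^ 1 := by norm_num
    _ ≤ 2 ^ m := Nat.pow_le_pow_right (by norm_num) hm
  have hq0 : q ≠ 0 := by omega
  -- characteristic 2
  have hchar : ringChar K = 2 := by
    rw [FiniteField.even_card_iff_char_two, hK, hq]
    have : (2:ℕ) ∣ (2^m)^3 := dvd_pow (dvd_pow_self 2 (by omega)) (by norm_num)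
    omega
  haveI : CharP K 2 := hchar ▸ ringChar.charP K
  have htwo : (2 : K) = 0 := by exact_mod_cast CharP.cast_eq_zero K 2
  have hfrob : ∀ u v : K, (u + v) ^ q = u ^ q + v ^ q := by
    intro u v; rw [hq]; exact add_pow_char_pow u v 2 m
  have hqq : ∀ x : K, (x ^ q) ^ q = x ^ (q ^ 2) := by
    intro x; rw [← pow_mul, ← pow_two]
  have hfq : ∀ x : K, (x ^ (q ^ 2)) ^ q = x := by
    intro x
    rw [← pow_mul, ← pow_succ, ← hK, FiniteField.pow_card]
  -- rewrite hE
  have hEE : A * (A^q * A^(q^2)) + A * B^(q^2) + A^q * B + A^(q^2) * B^q +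
      B * (B^q * B^(q^2)) + 1 = 0 := by
    have h := hE
    simp only [pow_add, pow_one] at h
    linear_combination h
  -- denominator nonzero
  have hD0ne : A + B * B^q ≠ 0 := by
    intro hd
    have hd1 : A^q + B^q * B^(q^2) = 0 := by
      have h := congrArg (fun z : K => z ^ q) hd
      simpa [hfrob, mul_pow, hqq, zero_pow hq0] using h
    have hd2 : A^(q^2) + B^(q^2) * B = 0 := by
      have h := congrArg (fun z : K => z ^ q) hd1
      simpa [hfrob, mul_pow, hqq, hfq, zero_pow hq0] using h
    have hn : (B * B^q * B^(q^2) + 1)^2 = 0 := by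
      linear_combination hEE + (-(B^(q^2)) - A^q*A^(q^2)) * hd
        + (-B + A^(q^2)*B*B^q) * hd1 + (-(B^q) - B*(B^q)^2*B^(q^2)) * hd2
        + (2*(B*B^q*B^(q^2)) + (B*B^q*B^(q^2))^2) * htwo
    have hb1 : B * B^q * B^(q^2) + 1 = 0 := by
      exact pow_eq_zero_iff (two_ne_zero) |>.mp hn
    exact h1 (by linear_combination B * hd1 - hb1)
  have hD1ne : A^q + B^q * B^(q^2) ≠ 0 := by
    intro h
    apply hD0ne
    have h0 : (A + B * B^q)^q = 0 := by
      rw [hfrob, mul_pow, hqq, h]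
    exact pow_eq_zero_iff hq0 |>.mp h0
  have hD2ne : A^(q^2) + B^(q^2) * B ≠ 0 := by
    intro h
    apply hD1ne
    have h0 : (A^q + B^q * B^(q^2))^q = 0 := by
      simp only [hfrob, mul_pow, hqq, hfq]; rw [h]
    exact pow_eq_zero_iff hq0 |>.mp h0
  set y : K := (1 + A^q*B) / (A + B*B^q) with hy
  have hyq : y^q = (1 + A^(q^2)*B^q) / (A^q + B^q*B^(q^2)) := by
    rw [hy, div_pow, hfrob, hfrob, one_pow, mul_pow, mul_pow, hqq, hqq]
  have hyqq : (y^q)^q = (1 + A*B^(q^2)) / (A^(q^2) + B^(q^2)*B) := by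
    rw [hyq, div_pow]; simp only [hfrob, one_pow, mul_pow, hqq, hfq]
  have hG1 : y^q * (1 + A*y) = B := by
    rw [hyq, hy]
    have hD0ne' : A + B^q * B ≠ 0 := by rwa [mul_comm] at hD0ne
    field_simp
    linear_combination (B*B^q)*hEE + (A + A*A^(q^2)*B^q - B^2*(B^q)^2*B^(q^2)
      - A^q*B^2*B^q - A*B*B^q*B^(q^2)) * htwo
  have hNy : y * (y^q * (y^q)^q) = 1 := by
    rw [hyqq, hyq, hy]
    have hD0ne' : A + B^q * B ≠ 0 := by rwa [mul_comm] at hD0ne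
    have hD2ne' : A^(q^2) + B * B^(q^2) ≠ 0 := by rwa [mul_comm] at hD2ne
    field_simp
    linear_combination (1 + B*B^q*B^(q^2)) * hEE - (B*B^q*B^(q^2) + (B*B^q*B^(q^2))^2
      + A^(q^2)*B*(B^q)^2*B^(q^2) + A^q*B^2*B^q*B^(q^2) + A*B*B^q*(B^(q^2))^2
      + A*A^q*A^(q^2)) * htwo
  have hy0 : y ≠ 0 := by
    intro h
    apply hB
    rw [h, zero_pow hq0, zero_mul] at hG1
    exact hG1.symm
  have hnorm : y ^ (q^2 + q + 1) = 1 := by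
    rw [pow_add, pow_add, pow_one, ← hqq]
    linear_combination hNy
  -- Hilbert 90
  obtain ⟨g, hg⟩ := IsCyclic.exists_generator (α := Kˣ)
  have hcardu : Nat.card Kˣ = q^3 - 1 := by
    rw [Nat.card_units, Nat.card_eq_fintype_card, hK]
  set u : Kˣ := Units.mk0 y hy0 with hu
  obtain ⟨k, hk⟩ : ∃ k : ℕ, g ^ k = u := by
    have h := hg u
    rw [← mem_powers_iff_mem_zpowers] at h
    obtain ⟨k, hk⟩ := h
    exact ⟨k, hk⟩
  have hu1 : u ^ (q^2 + q + 1) = 1 := by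
    ext
    push_cast
    simpa [hu] using hnorm
  have hdvd : q^3 - 1 ∣ k * (q^2 + q + 1) := by
    rw [← hcardu, ← orderOf_eq_card_of_forall_mem_zpowers hg]
    apply orderOf_dvd_of_pow_eq_one
    rw [pow_mul, hk, hu1]
  have hfact : (q - 1) * (q^2 + q + 1) = q^3 - 1 := by
    obtain ⟨r, rfl⟩ := Nat.exists_eq_add_of_le hq2
    have h3 : (2+r)^3 = (1+r)*((2+r)^2+(2+r)+1) + 1 := by ring
    have h4 : 2 + r - 1 = 1 + r := by omega
    rw [h4, h3]
    simp
  have hdk : (q - 1) ∣ k := by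
    apply Nat.dvd_of_mul_dvd_mul_right (show 0 < q^2 + q + 1 by positivity)
    rw [hfact]
    exact hdvd
  obtain ⟨t, ht⟩ := hdk
  have hxy : ((g^t : Kˣ) : K) ^ (q-1) = y := by
    have hgt : (g^t)^(q-1) = u := by
      rw [← pow_mul, mul_comm t (q-1), ← ht, hk]
    have := congrArg (Units.val) hgt
    push_cast at this
    simpa [hu] using this
  set x : K := ((g^t : Kˣ) : K) with hx
  have hx0 : x ≠ 0 := Units.ne_zero _
  have e1 : (q-1)*q + 1 = q^2 - q + 1 := by
    obtain ⟨r, rfl⟩ := Nat.exists_eq_add_of_le hq2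
    have hh : (2+r)^2 = (1+r)*(2+r) + (2+r) := by ring
    have h4 : 2 + r - 1 = 1 + r := by omega
    rw [h4, hh, Nat.add_sub_cancel]
  have e2 : (q-1)*(q+1) + 1 = q^2 := by
    obtain ⟨r, rfl⟩ := Nat.exists_eq_add_of_le hq2
    have h4 : 2 + r - 1 = 1 + r := by omega
    rw [h4]; ring
  have hfx : x ^ (q^2 - q + 1) + A * x^(q^2) + B * x = 0 := by
    rw [← e1, ← e2, pow_add, pow_add, pow_mul, pow_mul, hxy, pow_one]
    linear_combination x * hG1 + (B*x) * htwo
  have hf0 : (0:K) ^ (q^2 - q + 1) + A * (0:K)^(q^2) + B * (0:K) = 0 := by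
    rw [zero_pow (by omega : q^2 - q + 1 ≠ 0), zero_pow (pow_ne_zero 2 hq0)]
    ring
  have : x = 0 := hbij.injective (hfx.trans hf0.symm)
  exact hx0 this
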